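/- Let f : ℝ × ℝ → E be continuous into a Banach space E, and define F(t) = ∫₀ᵗ ∫₀ᵗ f(s₁, s₂) ds₂ ds₁. Then F is differentiable on ℝ with F'(t) = ∫₀ᵗ f(t, s) ds + ∫₀ᵗ f(s, t) ds. -/
import Mathlib

open MeasureTheory intervalIntegral

/-- Leibniz rule for a double integral over the expanding square `[0,t]²`:
if `f` is continuous then `F(t) = ∫₀ᵗ∫₀ᵗ f(s₁,s₂) ds₂ ds₁` is differentiable with
`F'(t) = ∫₀ᵗ f(t,s) ds + ∫₀ᵗ f(s,t) ds`. -/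
theorem hasDerivAt_double_interval_integral
    {E : Type*} [NormedAddCommGroup E] [NormedSpace ℝ E] [CompleteSpace E]
    (f : ℝ × ℝ → E) (hf : Continuous f) (t : ℝ) :
    HasDerivAt (fun t : ℝ => ∫ s₁ in (0:ℝ)..t, ∫ s₂ in (0:ℝ)..t, f (s₁, s₂))
      ((∫ s in (0:ℝ)..t, f (t, s)) + ∫ s in (0:ℝ)..t, f (s, t)) t := by
  set g : ℝ → ℝ → E := fun x y => ∫ s in (0:ℝ)..y, f (x, s) with hg_def
  have hg : Continuous (Function.uncurry g) :=
    intervalIntegral.continuous_parametric_primitive_of_continuous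
      (f := fun x s => f (x, s)) (hf.comp continuous_id)
  have hgx : ∀ y, Continuous fun x => g x y := fun y => hg.uncurry_right y
  have hfx : ∀ y, Continuous fun x : ℝ => f (x, y) := fun y =>
    hf.comp (continuous_id.prodMk continuous_const)
  have hfy : ∀ x, Continuous fun y : ℝ => f (x, y) := fun x =>
    hf.comp (continuous_const.prodMk continuous_id)
  rw [hasDerivAt_iff_isLittleO, Asymptotics.isLittleO_iff]
  intro c hc
  set ε : ℝ := c / (1 + |t|) with hε_def
  have hεpos : 0 < ε := div_pos hc (by positivity)
  -- δ₁ from continuity of g at (t,t)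
  obtain ⟨δ₁, hδ₁pos, hδ₁⟩ := Metric.continuousAt_iff.1 (hg.continuousAt (x := (t, t)))
    (ε/2) (by positivity)
  -- δ₂ from uniform continuity of f on a compact set
  set K : Set (ℝ × ℝ) := Set.uIcc 0 t ×ˢ Set.Icc (t - 1) (t + 1) with hK_def
  have hKcomp : IsCompact K := isCompact_uIcc.prod isCompact_Icc
  have hfu : UniformContinuousOn f K :=
    hKcomp.uniformContinuousOn_of_continuous hf.continuousOn
  obtain ⟨δ₂, hδ₂pos, hδ₂⟩ := Metric.uniformContinuousOn_iff.1 hfu (ε/2) (by positivity)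
  filter_upwards [Metric.ball_mem_nhds t (lt_min (lt_min hδ₁pos hδ₂pos) one_pos)] with u hu
  replace hu : |u - t| < min (min δ₁ δ₂) 1 := by
    have := Metric.mem_ball.1 hu; rwa [Real.dist_eq] at this
  have hu1 : |u - t| < δ₁ := hu.trans_le ((min_le_left _ _).trans (min_le_left _ _))
  have hu2 : |u - t| < δ₂ := hu.trans_le ((min_le_left _ _).trans (min_le_right _ _))
  have hu3 : |u - t| < 1 := hu.trans_le (min_le_right _ _)
  -- integrability facts
  have int_gu : ∀ a b : ℝ, IntervalIntegrable (fun s => g s u) volume a b :=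
    fun a b => (hgx u).intervalIntegrable a b
  have int_gt : ∀ a b : ℝ, IntervalIntegrable (fun s => g s t) volume a b :=
    fun a b => (hgx t).intervalIntegrable a b
  have int_ft : ∀ a b : ℝ, IntervalIntegrable (fun s => f (s, t)) volume a b :=
    fun a b => (hfx t).intervalIntegrable a b
  -- the key algebraic identity
  have key :
      (∫ s₁ in (0:ℝ)..u, ∫ s₂ in (0:ℝ)..u, f (s₁, s₂))
        - (∫ s₁ in (0:ℝ)..t, ∫ s₂ in (0:ℝ)..t, f (s₁, s₂))
        - (u - t) • ((∫ s in (0:ℝ)..t, f (t, s)) + ∫ s in (0:ℝ)..t, f (s, t))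
      = (∫ s in t..u, (g s u - g t t))
        + ∫ s in (0:ℝ)..t, (g s u - g s t - (u - t) • f (s, t)) := by
    have h1 : (∫ s in t..u, (g s u - g t t))
        = (∫ s in t..u, g s u) - (u - t) • g t t := by
      rw [intervalIntegral.integral_sub (int_gu t u) intervalIntegrable_const,
        intervalIntegral.integral_const]
    have h2 : (∫ s in (0:ℝ)..t, (g s u - g s t - (u - t) • f (s, t)))
        = (∫ s in (0:ℝ)..t, g s u) - (∫ s in (0:ℝ)..t, g s t)
          - (u - t) • ∫ s in (0:ℝ)..t, f (s, t) := by
      have hint2 : IntervalIntegrable (fun s => (u - t) • f (s, t)) volume 0 t :=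
        (int_ft 0 t).smul (u - t)
      rw [intervalIntegral.integral_sub ((int_gu 0 t).sub (int_gt 0 t)) hint2,
        intervalIntegral.integral_sub (int_gu 0 t) (int_gt 0 t),
        intervalIntegral.integral_smul]
    have h3 : (∫ s in t..u, g s u) = (∫ s in (0:ℝ)..u, g s u) - ∫ s in (0:ℝ)..t, g s u :=
      (intervalIntegral.integral_interval_sub_left (int_gu 0 u) (int_gu 0 t)).symm
    rw [h1, h2, h3]
    have hgtt : g t t = ∫ s in (0:ℝ)..t, f (t, s) := rfl
    rw [hgtt, smul_add]
    abel
  rw [key]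
  -- bound term A
  have hA : ‖∫ s in t..u, (g s u - g t t)‖ ≤ ε / 2 * |u - t| := by
    have hb : ∀ s ∈ Set.uIoc t u, ‖g s u - g t t‖ ≤ ε / 2 := by
      intro s hs
      have hs' : |s - t| ≤ |u - t| := Set.abs_sub_left_of_mem_uIcc (Set.uIoc_subset_uIcc hs)
      have hdist : dist ((s, u) : ℝ × ℝ) (t, t) < δ₁ := by
        rw [Prod.dist_eq]
        simp only [Real.dist_eq]
        exact max_lt (hs'.trans_lt hu1) hu1
      have := hδ₁ hdist
      rw [dist_eq_norm] at this
      exact this.le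
    exact intervalIntegral.norm_integral_le_of_norm_le_const hb
  -- bound term B
  have hB : ‖∫ s in (0:ℝ)..t, (g s u - g s t - (u - t) • f (s, t))‖
      ≤ ε / 2 * |u - t| * |t| := by
    have inner : ∀ s ∈ Set.uIoc (0:ℝ) t,
        ‖g s u - g s t - (u - t) • f (s, t)‖ ≤ ε / 2 * |u - t| := by
      intro s hs
      have hsK : s ∈ Set.uIcc (0:ℝ) t := Set.uIoc_subset_uIcc hs
      have heq : g s u - g s t - (u - t) • f (s, t)
          = ∫ τ in t..u, (f (s, τ) - f (s, t)) := by
        rw [intervalIntegral.integral_sub ((hfy s).intervalIntegrable t u)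
          intervalIntegrable_const, intervalIntegral.integral_const]
        have hsub : g s u - g s t = ∫ τ in t..u, f (s, τ) := by
          simp only [hg_def]
          exact intervalIntegral.integral_interval_sub_left
            ((hfy s).intervalIntegrable 0 u) ((hfy s).intervalIntegrable 0 t)
        rw [hsub]
      rw [heq]
      have hbound : ∀ τ ∈ Set.uIoc t u, ‖f (s, τ) - f (s, t)‖ ≤ ε / 2 := by
        intro τ hτ
        have hτ' : |τ - t| ≤ |u - t| := Set.abs_sub_left_of_mem_uIcc (Set.uIoc_subset_uIcc hτ)
        have habs : |τ - t| < 1 := hτ'.trans_lt hu3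
        rw [abs_sub_lt_iff] at habs
        obtain ⟨habs1, habs2⟩ := habs
        have hτK : (s, τ) ∈ K := by
          simp only [hK_def, Set.mem_prod, Set.mem_Icc]
          exact ⟨hsK, by linarith, by linarith⟩
        have htK : (s, t) ∈ K := by
          simp only [hK_def, Set.mem_prod, Set.mem_Icc]
          exact ⟨hsK, by linarith, by linarith⟩
        have hdist : dist ((s, τ) : ℝ × ℝ) (s, t) < δ₂ := by
          rw [Prod.dist_eq]
          simp only [Real.dist_eq, sub_self, abs_zero]
          exact max_lt hδ₂pos (hτ'.trans_lt hu2)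
        have := hδ₂ _ hτK _ htK hdist
        rw [dist_eq_norm] at this
        exact this.le
      exact intervalIntegral.norm_integral_le_of_norm_le_const hbound
    have := intervalIntegral.norm_integral_le_of_norm_le_const inner
    simpa [abs_sub_comm, mul_comm] using this
  calc ‖(∫ s in t..u, (g s u - g t t))
        + ∫ s in (0:ℝ)..t, (g s u - g s t - (u - t) • f (s, t))‖
      ≤ ε / 2 * |u - t| + ε / 2 * |u - t| * |t| :=
        le_trans (norm_add_le _ _) (add_le_add hA hB)
    _ ≤ ε * (1 + |t|) * |u - t| := by
        nlinarith [mul_nonneg hεpos.le (abs_nonneg (u - t)),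
          mul_nonneg (mul_nonneg hεpos.le (abs_nonneg (u - t))) (abs_nonneg t)]
    _ = c * ‖u - t‖ := by
        rw [hε_def, Real.norm_eq_abs]
        field_simp
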